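/- If α ∈ A is Ad_R-invariant and λ ∈ k, define r_α(a) = (λ + ε(α) − α)(ε(a) − a). Then r_α(a) ∈ ker ε for all a ∈ A, and the right ideal M_α = span{ r_α(a) b : a, b ∈ A } is Ad_R-invariant: Ad_R(M_α) ⊆ M_α ⊗ A, where Ad_R(a) = Σ a₍₂₎ ⊗ S(a₍₁₎) a₍₃₎. -/

import Mathlib

open TensorProduct HopfAlgebra Coalgebra LinearMap

variable {k : Type*} [Field k] {A : Type*} [Ring A] [HopfAlgebra k A]

/-- The universal differential `D a = a ⊗ 1 - 1 ⊗ a` as a linear map. -/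
noncomputable def Dlin (k A : Type*) [Field k] [Ring A] [HopfAlgebra k A] :
    A →ₗ[k] A ⊗[k] A :=
  (TensorProduct.mk k A A).flip 1 - TensorProduct.mk k A A 1

/-- Quantum Maurer-Cartan form `ω_U(a) = ε(a) 1⊗1 - Σ S(a₁) ⊗ a₂`. -/
noncomputable def omegaU (k A : Type*) [Field k] [Ring A] [HopfAlgebra k A] :
    A →ₗ[k] A ⊗[k] A :=
  (Coalgebra.counit (R := k) (A := A)).smulRight ((1 : A) ⊗ₜ[k] (1 : A)) -
    (TensorProduct.map (antipode (R := k)) LinearMap.id) ∘ₗ Coalgebra.comul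

/-- Left coaction on the universal calculus: `b ⊗ c ↦ Σ b₁c₁ ⊗ (b₂ ⊗ c₂)`. -/
noncomputable def deltaLU (k A : Type*) [Field k] [Ring A] [HopfAlgebra k A] :
    A ⊗[k] A →ₗ[k] A ⊗[k] (A ⊗[k] A) :=
  (TensorProduct.map (LinearMap.mul' k A) LinearMap.id) ∘ₗ
    (TensorProduct.tensorTensorTensorComm k A A A A).toLinearMap ∘ₗ
    (TensorProduct.map Coalgebra.comul Coalgebra.comul)

/-- Right coaction on the universal calculus: `b ⊗ c ↦ Σ (b₁ ⊗ c₁) ⊗ b₂c₂`. -/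
noncomputable def deltaRU (k A : Type*) [Field k] [Ring A] [HopfAlgebra k A] :
    A ⊗[k] A →ₗ[k] (A ⊗[k] A) ⊗[k] A :=
  (TensorProduct.map LinearMap.id (LinearMap.mul' k A)) ∘ₗ
    (TensorProduct.tensorTensorTensorComm k A A A A).toLinearMap ∘ₗ
    (TensorProduct.map Coalgebra.comul Coalgebra.comul)

/-- The right adjoint coaction `Ad_R(a) = Σ a₂ ⊗ S(a₁)a₃`. -/
noncomputable def AdR (k A : Type*) [Field k] [Ring A] [HopfAlgebra k A] :
    A →ₗ[k] A ⊗[k] A :=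
  (TensorProduct.map LinearMap.id (LinearMap.mul' k A)) ∘ₗ
    (TensorProduct.leftComm k A A A).toLinearMap ∘ₗ
    (TensorProduct.map (antipode (R := k)) LinearMap.id) ∘ₗ
    (TensorProduct.map LinearMap.id Coalgebra.comul) ∘ₗ Coalgebra.comul

/-- `r_α(a) = (λ + ε(α) − α)(ε(a) − a)`. -/
noncomputable def rAlpha (k A : Type*) [Field k] [Ring A] [HopfAlgebra k A]
    (α : A) (lam : k) (a : A) : A :=
  ((lam + Coalgebra.counit (R := k) α) • (1 : A) - α) *
    (Coalgebra.counit (R := k) a • (1 : A) - a)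

/-- The right ideal `M_α = span { r_α(a) b }`. -/
noncomputable def Malpha (k A : Type*) [Field k] [Ring A] [HopfAlgebra k A]
    (α : A) (lam : k) : Submodule k A :=
  Submodule.span k {x : A | ∃ a b : A, x = rAlpha k A α lam a * b}


lemma antipode_one'' : antipode (R := k) (1 : A) = 1 := by
  have h := mul_antipode_rTensor_comul_apply (R := k) (a := (1 : A))
  simp only [Bialgebra.comul_one, Algebra.TensorProduct.one_def, LinearMap.rTensor_tmul,
    LinearMap.mul'_apply, mul_one, Bialgebra.counit_one, Algebra.linearMap_apply, map_one] at h
  simpa using h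

lemma sum_counit_smul_right {a : A} {ι : Type*} (r : Coalgebra.Repr k a ι) :
    ∑ i ∈ r.index, counit (R := k) (r.left i) • r.right i = a := by
  have h := congrArg (TensorProduct.lid k A) (sum_counit_tmul_eq (R := k) r)
  rw [map_sum] at h
  simp only [TensorProduct.lid_tmul] at h
  simpa using h

lemma sum_counit_smul_left {a : A} {ι : Type*} (r : Coalgebra.Repr k a ι) :
    ∑ i ∈ r.index, counit (R := k) (r.right i) • r.left i = a := by
  have h := congrArg (TensorProduct.rid k A) (sum_tmul_counit_eq (R := k) r)
  rw [map_sum] at h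
  simp only [TensorProduct.rid_tmul] at h
  simpa using h

/-- Product of two representations. -/
@[reducible] noncomputable def mulRepr {a b : A} {ι κ : Type*} (ra : Coalgebra.Repr k a ι) (rb : Coalgebra.Repr k b κ) :
    Coalgebra.Repr k (a * b) (ι × κ) where
  index := ra.index ×ˢ rb.index
  left := fun p => ra.left p.1 * rb.left p.2
  right := fun p => ra.right p.1 * rb.right p.2
  eq := by
    have h : (CoalgebraStruct.comul (R := k) (a * b) : A ⊗[k] A) = comul a * comul b :=
      Bialgebra.comul_mul a b
    rw [h, ← ra.eq, ← rb.eq, Finset.sum_mul_sum, Finset.sum_product]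
    simp [Algebra.TensorProduct.tmul_mul_tmul]

@[simp] lemma mulRepr_index {a b : A} {ι κ : Type*} (ra : Coalgebra.Repr k a ι) (rb : Coalgebra.Repr k b κ) :
    (mulRepr ra rb).index = ra.index ×ˢ rb.index := rfl

@[simp] lemma mulRepr_left {a b : A} {ι κ : Type*} (ra : Coalgebra.Repr k a ι) (rb : Coalgebra.Repr k b κ)
    (x : ι × κ) : (mulRepr ra rb).left x = ra.left x.1 * rb.left x.2 := rfl

@[simp] lemma mulRepr_right {a b : A} {ι κ : Type*} (ra : Coalgebra.Repr k a ι) (rb : Coalgebra.Repr k b κ)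
    (x : ι × κ) : (mulRepr ra rb).right x = ra.right x.1 * rb.right x.2 := rfl

/-- Triple multiplication gadget. -/
noncomputable def trip (f g h : A →ₗ[k] A) : A ⊗[k] (A ⊗[k] A) →ₗ[k] A :=
  LinearMap.mul' k A ∘ₗ (LinearMap.mul' k A).lTensor A ∘ₗ
    TensorProduct.map f (TensorProduct.map g h)

@[simp] lemma trip_tmul (f g h : A →ₗ[k] A) (x y z : A) :
    trip f g h (x ⊗ₜ[k] (y ⊗ₜ[k] z)) = f x * (g y * h z) := by
  simp [trip]

lemma reassoc_sum {a : A} {ι κ μ : Type*} (r : Coalgebra.Repr k a ι)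
    (r1 : ∀ i, Coalgebra.Repr k (r.left i) κ) (r2 : ∀ i, Coalgebra.Repr k (r.right i) μ)
    (f g h : A →ₗ[k] A) :
    ∑ i ∈ r.index, ∑ j ∈ (r2 i).index,
      f (r.left i) * (g ((r2 i).left j) * h ((r2 i).right j)) =
    ∑ i ∈ r.index, ∑ j ∈ (r1 i).index,
      f ((r1 i).left j) * (g ((r1 i).right j) * h (r.right i)) := by
  have h0 := congrArg (trip f g h) (sum_tmul_tmul_eq (R := k) r r1 r2)
  simpa [map_sum] using h0.symm

lemma antipode_mul'' (a b : A) :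
    antipode (R := k) (a * b) = antipode (R := k) b * antipode (R := k) a := by
  let ra : Coalgebra.Repr k a (A × A) := ℛ k a
  let rb : Coalgebra.Repr k b (A × A) := ℛ k b
  let ra1 : ∀ i, Coalgebra.Repr k (ra.left i) (A × A) := fun i => ℛ k _
  let ra2 : ∀ i, Coalgebra.Repr k (ra.right i) (A × A) := fun i => ℛ k _
  let rb1 : ∀ p, Coalgebra.Repr k (rb.left p) (A × A) := fun p => ℛ k _
  let rb2 : ∀ p, Coalgebra.Repr k (rb.right p) (A × A) := fun p => ℛ k _
  have hX2 : (∑ p ∈ rb.index, ∑ q ∈ (rb2 p).index, ∑ i ∈ ra.index, ∑ j ∈ (ra2 i).index,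
      antipode (R := k) (ra.left i * rb.left p) *
        (((ra2 i).left j * (rb2 p).left q) *
          (antipode (R := k) ((rb2 p).right q) * antipode (R := k) ((ra2 i).right j))))
      = antipode (R := k) (a * b) := by
    calc (∑ p ∈ rb.index, ∑ q ∈ (rb2 p).index, ∑ i ∈ ra.index, ∑ j ∈ (ra2 i).index,
        antipode (R := k) (ra.left i * rb.left p) *
          (((ra2 i).left j * (rb2 p).left q) *
            (antipode (R := k) ((rb2 p).right q) * antipode (R := k) ((ra2 i).right j))))
        = ∑ p ∈ rb.index, ∑ i ∈ ra.index, ∑ j ∈ (ra2 i).index, ∑ q ∈ (rb2 p).index,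
          antipode (R := k) (ra.left i * rb.left p) *
            (((ra2 i).left j * (rb2 p).left q) *
              (antipode (R := k) ((rb2 p).right q) * antipode (R := k) ((ra2 i).right j))) := by
          refine Finset.sum_congr rfl fun p _ => ?_
          rw [Finset.sum_comm]
          exact Finset.sum_congr rfl fun i _ => Finset.sum_comm
      _ = ∑ p ∈ rb.index, ∑ i ∈ ra.index, ∑ j ∈ (ra2 i).index,
            counit (R := k) (rb.right p) •
              (antipode (R := k) (ra.left i * rb.left p) *
                ((ra2 i).left j * antipode (R := k) ((ra2 i).right j))) := by
          refine Finset.sum_congr rfl fun p _ => Finset.sum_congr rfl fun i _ =>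
            Finset.sum_congr rfl fun j _ => ?_
          calc (∑ q ∈ (rb2 p).index,
              antipode (R := k) (ra.left i * rb.left p) *
                (((ra2 i).left j * (rb2 p).left q) *
                  (antipode (R := k) ((rb2 p).right q) * antipode (R := k) ((ra2 i).right j))))
              = ∑ q ∈ (rb2 p).index,
                (antipode (R := k) (ra.left i * rb.left p) * (ra2 i).left j) *
                  ((rb2 p).left q * antipode (R := k) ((rb2 p).right q)) *
                    antipode (R := k) ((ra2 i).right j) :=
                Finset.sum_congr rfl fun q _ => by simp only [mul_assoc]
            _ = (antipode (R := k) (ra.left i * rb.left p) * (ra2 i).left j) *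
                  (∑ q ∈ (rb2 p).index,
                    (rb2 p).left q * antipode (R := k) ((rb2 p).right q)) *
                    antipode (R := k) ((ra2 i).right j) := by
                rw [← Finset.sum_mul, ← Finset.mul_sum]
            _ = (antipode (R := k) (ra.left i * rb.left p) * (ra2 i).left j) *
                  (counit (R := k) (rb.right p) • 1) * antipode (R := k) ((ra2 i).right j) := by
                rw [sum_mul_antipode_eq_smul (rb2 p)]
            _ = counit (R := k) (rb.right p) •
                  (antipode (R := k) (ra.left i * rb.left p) *
                    ((ra2 i).left j * antipode (R := k) ((ra2 i).right j))) := by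
                simp only [mul_smul_comm, smul_mul_assoc, mul_one, mul_assoc]
      _ = ∑ p ∈ rb.index, ∑ i ∈ ra.index,
            (counit (R := k) (rb.right p) * counit (R := k) (ra.right i)) •
              antipode (R := k) (ra.left i * rb.left p) := by
          refine Finset.sum_congr rfl fun p _ => Finset.sum_congr rfl fun i _ => ?_
          rw [← Finset.smul_sum, ← Finset.mul_sum, sum_mul_antipode_eq_smul (ra2 i)]
          simp only [mul_smul_comm, mul_one, smul_smul]
      _ = antipode (R := k) (a * b) := by
          have ha := sum_counit_smul_left (k := k) ra
          have hb := sum_counit_smul_left (k := k) rb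
          conv_rhs => rw [← ha, ← hb]
          rw [Finset.sum_mul_sum, map_sum, Finset.sum_comm]
          refine Finset.sum_congr rfl fun p _ => ?_
          rw [map_sum]
          refine Finset.sum_congr rfl fun i _ => ?_
          rw [smul_mul_smul_comm, map_smul, mul_comm]
  have hX1 : (∑ p ∈ rb.index, ∑ q ∈ (rb2 p).index, ∑ i ∈ ra.index, ∑ j ∈ (ra2 i).index,
      antipode (R := k) (ra.left i * rb.left p) *
        (((ra2 i).left j * (rb2 p).left q) *
          (antipode (R := k) ((rb2 p).right q) * antipode (R := k) ((ra2 i).right j))))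
      = antipode (R := k) b * antipode (R := k) a := by
    calc (∑ p ∈ rb.index, ∑ q ∈ (rb2 p).index, ∑ i ∈ ra.index, ∑ j ∈ (ra2 i).index,
        antipode (R := k) (ra.left i * rb.left p) *
          (((ra2 i).left j * (rb2 p).left q) *
            (antipode (R := k) ((rb2 p).right q) * antipode (R := k) ((ra2 i).right j))))
        = ∑ p ∈ rb.index, ∑ q ∈ (rb2 p).index, ∑ i ∈ ra.index, ∑ j ∈ (ra1 i).index,
          antipode (R := k) ((ra1 i).left j * rb.left p) *
            (((ra1 i).right j * (rb2 p).left q) *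
              (antipode (R := k) ((rb2 p).right q) * antipode (R := k) (ra.right i))) := by
          refine Finset.sum_congr rfl fun p _ => Finset.sum_congr rfl fun q _ => ?_
          have h := reassoc_sum ra ra1 ra2
            (antipode (R := k) ∘ₗ LinearMap.mulRight k (rb.left p))
            (LinearMap.mulRight k ((rb2 p).left q))
            (LinearMap.mulLeft k (antipode (R := k) ((rb2 p).right q)) ∘ₗ antipode (R := k))
          simp only [LinearMap.coe_comp, Function.comp_apply, LinearMap.mulRight_apply,
            LinearMap.mulLeft_apply] at h
          exact h
      _ = ∑ i ∈ ra.index, ∑ j ∈ (ra1 i).index, ∑ p ∈ rb.index, ∑ q ∈ (rb2 p).index,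
          antipode (R := k) ((ra1 i).left j * rb.left p) *
            (((ra1 i).right j * (rb2 p).left q) *
              (antipode (R := k) ((rb2 p).right q) * antipode (R := k) (ra.right i))) := by
          calc (∑ p ∈ rb.index, ∑ q ∈ (rb2 p).index, ∑ i ∈ ra.index, ∑ j ∈ (ra1 i).index,
              antipode (R := k) ((ra1 i).left j * rb.left p) *
                (((ra1 i).right j * (rb2 p).left q) *
                  (antipode (R := k) ((rb2 p).right q) * antipode (R := k) (ra.right i))))
              = ∑ p ∈ rb.index, ∑ i ∈ ra.index, ∑ j ∈ (ra1 i).index, ∑ q ∈ (rb2 p).index,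
                antipode (R := k) ((ra1 i).left j * rb.left p) *
                  (((ra1 i).right j * (rb2 p).left q) *
                    (antipode (R := k) ((rb2 p).right q) * antipode (R := k) (ra.right i))) := by
                refine Finset.sum_congr rfl fun p _ => ?_
                rw [Finset.sum_comm]
                exact Finset.sum_congr rfl fun i _ => Finset.sum_comm
            _ = ∑ i ∈ ra.index, ∑ p ∈ rb.index, ∑ j ∈ (ra1 i).index, ∑ q ∈ (rb2 p).index,
                antipode (R := k) ((ra1 i).left j * rb.left p) *
                  (((ra1 i).right j * (rb2 p).left q) *
                    (antipode (R := k) ((rb2 p).right q) * antipode (R := k) (ra.right i))) :=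
                Finset.sum_comm
            _ = ∑ i ∈ ra.index, ∑ j ∈ (ra1 i).index, ∑ p ∈ rb.index, ∑ q ∈ (rb2 p).index,
                antipode (R := k) ((ra1 i).left j * rb.left p) *
                  (((ra1 i).right j * (rb2 p).left q) *
                    (antipode (R := k) ((rb2 p).right q) * antipode (R := k) (ra.right i))) :=
                Finset.sum_congr rfl fun i _ => Finset.sum_comm
      _ = ∑ i ∈ ra.index, ∑ j ∈ (ra1 i).index, ∑ p ∈ rb.index, ∑ q ∈ (rb1 p).index,
          antipode (R := k) ((ra1 i).left j * (rb1 p).left q) *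
            (((ra1 i).right j * (rb1 p).right q) *
              (antipode (R := k) (rb.right p) * antipode (R := k) (ra.right i))) := by
          refine Finset.sum_congr rfl fun i _ => Finset.sum_congr rfl fun j _ => ?_
          have h := reassoc_sum rb rb1 rb2
            (antipode (R := k) ∘ₗ LinearMap.mulLeft k ((ra1 i).left j))
            (LinearMap.mulLeft k ((ra1 i).right j))
            (LinearMap.mulRight k (antipode (R := k) (ra.right i)) ∘ₗ antipode (R := k))
          simp only [LinearMap.coe_comp, Function.comp_apply, LinearMap.mulRight_apply,
            LinearMap.mulLeft_apply] at h
          exact h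
      _ = ∑ i ∈ ra.index, ∑ p ∈ rb.index,
            (counit (R := k) (ra.left i) * counit (R := k) (rb.left p)) •
              (antipode (R := k) (rb.right p) * antipode (R := k) (ra.right i)) := by
          refine Finset.sum_congr rfl fun i _ => ?_
          rw [Finset.sum_comm]
          refine Finset.sum_congr rfl fun p _ => ?_
          have hc := sum_antipode_mul_eq_smul (mulRepr (ra1 i) (rb1 p))
          calc (∑ j ∈ (ra1 i).index, ∑ q ∈ (rb1 p).index,
              antipode (R := k) ((ra1 i).left j * (rb1 p).left q) *
                (((ra1 i).right j * (rb1 p).right q) *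
                  (antipode (R := k) (rb.right p) * antipode (R := k) (ra.right i))))
              = ∑ j ∈ (ra1 i).index, ∑ q ∈ (rb1 p).index,
                (antipode (R := k) ((ra1 i).left j * (rb1 p).left q) *
                  ((ra1 i).right j * (rb1 p).right q)) *
                  (antipode (R := k) (rb.right p) * antipode (R := k) (ra.right i)) :=
                Finset.sum_congr rfl fun j _ => Finset.sum_congr rfl fun q _ => by
                  simp only [mul_assoc]
            _ = (∑ j ∈ (ra1 i).index, ∑ q ∈ (rb1 p).index,
                  antipode (R := k) ((ra1 i).left j * (rb1 p).left q) *
                    ((ra1 i).right j * (rb1 p).right q)) *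
                  (antipode (R := k) (rb.right p) * antipode (R := k) (ra.right i)) := by
                simp only [← Finset.sum_mul]
            _ = (counit (R := k) (ra.left i) * counit (R := k) (rb.left p)) •
                  (antipode (R := k) (rb.right p) * antipode (R := k) (ra.right i)) := by
                rw [← Finset.sum_product']
                have h2 := congrArg (fun z : A => z *
                  (antipode (R := k) (rb.right p) * antipode (R := k) (ra.right i))) hc
                exact h2.trans (by rw [Bialgebra.counit_mul]; simp [smul_mul_assoc])
      _ = antipode (R := k) b * antipode (R := k) a := by
          have ha : antipode (R := k) a =
              ∑ i ∈ ra.index, counit (R := k) (ra.left i) • antipode (R := k) (ra.right i) := by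
            conv_lhs => rw [← sum_counit_smul_right (k := k) ra]
            rw [map_sum]
            exact Finset.sum_congr rfl fun i _ => by rw [map_smul]
          have hb : antipode (R := k) b =
              ∑ p ∈ rb.index, counit (R := k) (rb.left p) • antipode (R := k) (rb.right p) := by
            conv_lhs => rw [← sum_counit_smul_right (k := k) rb]
            rw [map_sum]
            exact Finset.sum_congr rfl fun p _ => by rw [map_smul]
          rw [hb, ha, Finset.sum_mul_sum, Finset.sum_comm]
          refine Finset.sum_congr rfl fun i _ => Finset.sum_congr rfl fun p _ => ?_
          rw [smul_mul_smul_comm, mul_comm]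
  rw [← hX2, hX1]


lemma adR_apply (a : A) {ι κ : Type*} (r : Coalgebra.Repr k a ι) (r2 : ∀ i, Coalgebra.Repr k (r.right i) κ) :
    AdR k A a = ∑ i ∈ r.index, ∑ j ∈ (r2 i).index,
      (r2 i).left j ⊗ₜ[k] (antipode (R := k) (r.left i) * (r2 i).right j) := by
  rw [AdR]
  simp only [LinearMap.coe_comp, Function.comp_apply, LinearEquiv.coe_coe]
  rw [← r.eq]
  simp only [map_sum, TensorProduct.map_tmul, LinearMap.id_coe, id_eq]
  refine Finset.sum_congr rfl fun i _ => ?_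
  rw [← (r2 i).eq]
  simp only [TensorProduct.tmul_sum, map_sum, TensorProduct.map_tmul, LinearMap.id_coe, id_eq,
    TensorProduct.leftComm_tmul, LinearMap.mul'_apply]

lemma adR_one : AdR k A (1 : A) = (1 : A) ⊗ₜ[k] (1 : A) := by
  rw [AdR]
  simp [Bialgebra.comul_one, Algebra.TensorProduct.one_def, antipode_one'']

lemma adR_mul (x y : A) {ι κ : Type*} (r : Coalgebra.Repr k y ι) (r2 : ∀ i, Coalgebra.Repr k (r.right i) κ) :
    AdR k A (x * y) = ∑ i ∈ r.index, ∑ j ∈ (r2 i).index,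
      (TensorProduct.map (LinearMap.mulRight k ((r2 i).left j))
        (LinearMap.mulLeft k (antipode (R := k) (r.left i)) ∘ₗ
          LinearMap.mulRight k ((r2 i).right j))) (AdR k A x) := by
  let rx : Coalgebra.Repr k x (A × A) := ℛ k x
  let rx2 : ∀ s, Coalgebra.Repr k (rx.right s) (A × A) := fun s => ℛ k (rx.right s)
  have hL : AdR k A (x * y) = ∑ s ∈ rx.index, ∑ i ∈ r.index, ∑ t ∈ (rx2 s).index,
      ∑ j ∈ (r2 i).index, ((rx2 s).left t * (r2 i).left j) ⊗ₜ[k]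
          (antipode (R := k) (r.left i) * (antipode (R := k) (rx.left s) *
            ((rx2 s).right t * (r2 i).right j))) := by
    rw [adR_apply (x * y) (mulRepr rx r) (fun si => mulRepr (rx2 si.1) (r2 si.2))]
    simp only [mulRepr_index, mulRepr_left, mulRepr_right, Finset.sum_product,
      antipode_mul'', mul_assoc]
  have hR : (∑ i ∈ r.index, ∑ j ∈ (r2 i).index,
      (TensorProduct.map (LinearMap.mulRight k ((r2 i).left j))
        (LinearMap.mulLeft k (antipode (R := k) (r.left i)) ∘ₗ
          LinearMap.mulRight k ((r2 i).right j))) (AdR k A x))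
      = ∑ i ∈ r.index, ∑ j ∈ (r2 i).index, ∑ s ∈ rx.index, ∑ t ∈ (rx2 s).index,
        ((rx2 s).left t * (r2 i).left j) ⊗ₜ[k]
          (antipode (R := k) (r.left i) * (antipode (R := k) (rx.left s) *
            ((rx2 s).right t * (r2 i).right j))) := by
    refine Finset.sum_congr rfl fun i _ => Finset.sum_congr rfl fun j _ => ?_
    rw [adR_apply x rx rx2]
    simp only [map_sum, TensorProduct.map_tmul, LinearMap.coe_comp, Function.comp_apply,
      LinearMap.mulRight_apply, LinearMap.mulLeft_apply, mul_assoc]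
  rw [hL, hR]
  calc (∑ s ∈ rx.index, ∑ i ∈ r.index, ∑ t ∈ (rx2 s).index, ∑ j ∈ (r2 i).index,
        ((rx2 s).left t * (r2 i).left j) ⊗ₜ[k]
          (antipode (R := k) (r.left i) * (antipode (R := k) (rx.left s) *
            ((rx2 s).right t * (r2 i).right j))))
      = ∑ s ∈ rx.index, ∑ i ∈ r.index, ∑ j ∈ (r2 i).index, ∑ t ∈ (rx2 s).index,
        ((rx2 s).left t * (r2 i).left j) ⊗ₜ[k]
          (antipode (R := k) (r.left i) * (antipode (R := k) (rx.left s) *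
            ((rx2 s).right t * (r2 i).right j))) := by
        refine Finset.sum_congr rfl fun s _ => Finset.sum_congr rfl fun i _ => Finset.sum_comm
    _ = ∑ i ∈ r.index, ∑ s ∈ rx.index, ∑ j ∈ (r2 i).index, ∑ t ∈ (rx2 s).index,
        ((rx2 s).left t * (r2 i).left j) ⊗ₜ[k]
          (antipode (R := k) (r.left i) * (antipode (R := k) (rx.left s) *
            ((rx2 s).right t * (r2 i).right j))) := Finset.sum_comm
    _ = ∑ i ∈ r.index, ∑ j ∈ (r2 i).index, ∑ s ∈ rx.index, ∑ t ∈ (rx2 s).index,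
        ((rx2 s).left t * (r2 i).left j) ⊗ₜ[k]
          (antipode (R := k) (r.left i) * (antipode (R := k) (rx.left s) *
            ((rx2 s).right t * (r2 i).right j))) := Finset.sum_congr rfl fun i _ => Finset.sum_comm

/-- `r_α(a) ∈ ker ε` and `M_α` is `Ad_R`-invariant:
`Ad_R(M_α) ⊆ M_α ⊗ A`. -/
theorem Malpha_AdR_invariant (α : A) (lam : k)
    (h : AdR k A α = α ⊗ₜ[k] (1 : A)) :
    (∀ a : A, Coalgebra.counit (R := k) (rAlpha k A α lam a) = 0) ∧
    (∀ m ∈ Malpha k A α lam,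
      AdR k A m ∈ LinearMap.range
        (TensorProduct.map (Malpha k A α lam).subtype
          (LinearMap.id : A →ₗ[k] A))) := by
  have hcounit : ∀ a : A, Coalgebra.counit (R := k) (rAlpha k A α lam a) = 0 := by
    intro a
    rw [rAlpha, Bialgebra.counit_mul]
    have h0 : counit (R := k) (counit (R := k) a • (1 : A) - a) = 0 := by
      rw [map_sub, map_smul, Bialgebra.counit_one, smul_eq_mul, mul_one, sub_self]
    rw [h0, mul_zero]
  refine ⟨hcounit, ?_⟩
  set β : A := (lam + counit (R := k) α) • (1 : A) - α with hβdef
  have hβ : AdR k A β = β ⊗ₜ[k] (1 : A) := by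
    rw [hβdef, map_sub, map_smul, adR_one, h, TensorProduct.sub_tmul, TensorProduct.smul_tmul']
  have hrA : ∀ (a : A) (r : Coalgebra.Repr k a (A × A)) (r2 : ∀ i, Coalgebra.Repr k (r.right i) (A × A)),
      AdR k A (rAlpha k A α lam a) = ∑ i ∈ r.index, ∑ j ∈ (r2 i).index,
        rAlpha k A α lam ((r2 i).left j) ⊗ₜ[k]
          (antipode (R := k) (r.left i) * (r2 i).right j) := by
    intro a r r2
    have h1 : rAlpha k A α lam a = counit (R := k) a • β - β * a := by
      rw [rAlpha, ← hβdef, mul_sub, mul_smul_comm, mul_one]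
    have h2 : AdR k A (β * a) = ∑ i ∈ r.index, ∑ j ∈ (r2 i).index,
        (β * (r2 i).left j) ⊗ₜ[k] (antipode (R := k) (r.left i) * (r2 i).right j) := by
      rw [adR_mul β a r r2]
      refine Finset.sum_congr rfl fun i _ => Finset.sum_congr rfl fun j _ => ?_
      rw [hβ, TensorProduct.map_tmul]
      simp only [LinearMap.coe_comp, Function.comp_apply, LinearMap.mulRight_apply,
        LinearMap.mulLeft_apply, one_mul]
    have h3 : counit (R := k) a • (β ⊗ₜ[k] (1 : A)) = ∑ i ∈ r.index, ∑ j ∈ (r2 i).index,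
        (counit (R := k) ((r2 i).left j) • β) ⊗ₜ[k]
          (antipode (R := k) (r.left i) * (r2 i).right j) := by
      calc counit (R := k) a • (β ⊗ₜ[k] (1 : A))
          = β ⊗ₜ[k] (counit (R := k) a • (1 : A)) := by rw [TensorProduct.tmul_smul]
        _ = β ⊗ₜ[k] ∑ i ∈ r.index, antipode (R := k) (r.left i) * r.right i := by
            rw [sum_antipode_mul_eq_smul r]
        _ = ∑ i ∈ r.index, β ⊗ₜ[k] (antipode (R := k) (r.left i) * r.right i) := by
            rw [TensorProduct.tmul_sum]
        _ = ∑ i ∈ r.index, ∑ j ∈ (r2 i).index, (counit (R := k) ((r2 i).left j) • β) ⊗ₜ[k]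
              (antipode (R := k) (r.left i) * (r2 i).right j) := by
            refine Finset.sum_congr rfl fun i _ => ?_
            conv_lhs => rw [← sum_counit_smul_right (r2 i)]
            rw [Finset.mul_sum, TensorProduct.tmul_sum]
            refine Finset.sum_congr rfl fun j _ => ?_
            rw [mul_smul_comm, TensorProduct.tmul_smul, TensorProduct.smul_tmul']
    calc AdR k A (rAlpha k A α lam a)
        = counit (R := k) a • AdR k A β - AdR k A (β * a) := by rw [h1, map_sub, map_smul]
      _ = ∑ i ∈ r.index, ∑ j ∈ (r2 i).index,
            rAlpha k A α lam ((r2 i).left j) ⊗ₜ[k]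
              (antipode (R := k) (r.left i) * (r2 i).right j) := by
          rw [hβ, h3, h2, ← Finset.sum_sub_distrib]
          refine Finset.sum_congr rfl fun i _ => ?_
          rw [← Finset.sum_sub_distrib]
          refine Finset.sum_congr rfl fun j _ => ?_
          rw [← TensorProduct.sub_tmul]
          congr 1
          rw [rAlpha, ← hβdef, mul_sub, mul_smul_comm, mul_one]
  intro m hm
  refine Submodule.span_induction ?_ ?_ ?_ ?_ hm
  · rintro x ⟨a, b, rfl⟩
    rw [adR_mul (rAlpha k A α lam a) b (ℛ k b) (fun p => ℛ k _)]
    refine Submodule.sum_mem _ fun p _ => Submodule.sum_mem _ fun q _ => ?_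
    rw [hrA a (ℛ k a) (fun i => ℛ k _), map_sum]
    refine Submodule.sum_mem _ fun i _ => ?_
    rw [map_sum]
    refine Submodule.sum_mem _ fun j _ => ?_
    rw [TensorProduct.map_tmul]
    simp only [LinearMap.coe_comp, Function.comp_apply, LinearMap.mulRight_apply,
      LinearMap.mulLeft_apply]
    have hmem : ∀ x y : A, x ∈ Malpha k A α lam →
        x ⊗ₜ[k] y ∈ LinearMap.range
          (TensorProduct.map (Malpha k A α lam).subtype (LinearMap.id : A →ₗ[k] A)) :=
      fun x y hx => ⟨⟨x, hx⟩ ⊗ₜ[k] y, by simp⟩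
    exact hmem _ _ (Submodule.subset_span ⟨_, _, rfl⟩)
  · rw [map_zero]; exact Submodule.zero_mem _
  · intro u v _ _ hu hv
    rw [map_add]; exact Submodule.add_mem _ hu hv
  · intro c u _ hu
    rw [map_smul]; exact Submodule.smul_mem _ _ hu
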